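/- For an LRU cache, if a set of cache states C has n deterministic ages (there exist blocks a₀,...,a_{n−1} with c(aᵢ) = i for every c ∈ C), then after accessing any block aⱼ from this list, the updated set upd_{aⱼ}(C) still has n deterministic ages (witnessed by the reordered list aⱼ, a₀, ..., a_{j−1}, a_{j+1}, ..., a_{n−1}). -/
import Mathlib


/-- LRU update: accessed block gets age 0; blocks younger than it (or all cached
blocks on a miss) age by one; other blocks are unchanged. -/
def updLRU (A : ℕ) (b : ℕ) (c : ℕ → ℕ) : ℕ → ℕ := fun b' =>
  if b' = b then 0 else if c b' < min (c b) A then c b' + 1 else c b'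

/-- FIFO update: hits leave the state unchanged; on a miss the accessed block gets
age 0 and cached blocks age by one (the oldest is evicted). -/
def updFIFO (A : ℕ) (b : ℕ) (c : ℕ → ℕ) : ℕ → ℕ :=
  if c b < A then c
  else fun b' => if b' = b then 0 else if c b' < A then c b' + 1 else c b'

/-- Generic permutation-policy update with permutation function `P`:
on a hit, ages of cached blocks are permuted by `P (c b)`; on a miss the accessed
block gets age 0 and cached blocks age by one. -/
def updPerm (P : ℕ → ℕ → ℕ) (A : ℕ) (b : ℕ) (c : ℕ → ℕ) : ℕ → ℕ :=
  if c b < A then fun b' => if c b' < A then P (c b) (c b') else c b'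
  else fun b' => if b' = b then 0 else if c b' < A then c b' + 1 else c b'

/-- The PLRU permutation function. -/
def piPLRU (a a' : ℕ) : ℕ :=
  if _h1 : a' = a then 0
  else if _h2 : a % 2 = 0 ∧ a' % 2 = 1 then a'
  else if _h3 : a % 2 = 1 ∧ a' % 2 = 0 then a' + 1
  else 2 * piPLRU (a / 2) (a' / 2)
termination_by a + a'
decreasing_by omega

/-- The PLRU update. -/
def updPLRU (A : ℕ) : ℕ → (ℕ → ℕ) → (ℕ → ℕ) := updPerm piPLRU A

/-- Sequential application of the update function along a trace of accesses. -/
def updTrace (upd : ℕ → (ℕ → ℕ) → (ℕ → ℕ)) : List ℕ → (ℕ → ℕ) → (ℕ → ℕ)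
  | [], c => c
  | b :: t, c => updTrace upd t (upd b c)

/-- States reachable from `c₀` using traces over the set of blocks `B`. -/
def Reach (upd : ℕ → (ℕ → ℕ) → (ℕ → ℕ)) (B : Set ℕ) (c₀ : ℕ → ℕ) : Set (ℕ → ℕ) :=
  {c | ∃ t : List ℕ, (∀ b ∈ t, b ∈ B) ∧ updTrace upd t c₀ = c}

/-- Cache state invariant: ages are at most `A`, and distinct blocks have distinct
ages unless both have age `A` (uncached). -/
def CacheInv (A : ℕ) (c : ℕ → ℕ) : Prop :=
  (∀ b, c b ≤ A) ∧ ∀ b b', c b < A → c b = c b' → b = b'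

/-- `c` is filled with `B`: the blocks of `B` occupy the youngest ages
`{0, …, min (A, |B|−1)}`, and all remaining cache lines are occupied
(by attacker blocks). -/
def FilledWith (A : ℕ) (c : ℕ → ℕ) (B : Finset ℕ) : Prop :=
  CacheInv A c ∧ (∀ a, a < A → ∃ b, c b = a) ∧
    c '' ↑B = Set.Iio (min (A + 1) B.card)

/-- `c` is empty w.r.t. `B`: no block of `B` is cached, and all cache lines are
occupied (by attacker blocks). -/
def EmptyWith (A : ℕ) (c : ℕ → ℕ) (B : Finset ℕ) : Prop :=
  CacheInv A c ∧ (∀ b ∈ B, c b = A) ∧ (∀ a, a < A → ∃ b, c b = a)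

/-- For an LRU cache, if a set `C` of cache states has `n` deterministic ages,
witnessed by blocks `a 0, …, a (n−1)` occupying ages `0, …, n−1` in every state
of `C`, then after accessing `a j` the updated set still has `n` deterministic
ages, witnessed by the reordered list `a j, a 0, …, a (j−1), a (j+1), …, a (n−1)`. -/
theorem lru_deterministic_ages_preserved (A n : ℕ) (hn : n ≤ A)
    (C : Set (ℕ → ℕ)) (hC : C.Nonempty) (a : ℕ → ℕ)
    (hdet : ∀ c ∈ C, ∀ i, i < n → c (a i) = i) (j : ℕ) (hj : j < n) :
    ∀ c ∈ C, ∀ i, i < n →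
      updLRU A (a j) c
        ((fun i => if i = 0 then a j else if i ≤ j then a (i - 1) else a i) i) = i := by
  intro c hc i hi
  have hcj : c (a j) = j := hdet c hc j hj
  simp only [updLRU]
  rcases Nat.eq_zero_or_pos i with h0 | h0
  · simp [h0, hcj]
  · have hine : i ≠ 0 := h0.ne'
    by_cases hij : i ≤ j
    · have h1 : i - 1 < n := by omega
      have hci : c (a (i - 1)) = i - 1 := hdet c hc _ h1
      have hne : a (i - 1) ≠ a j := by
        intro h; rw [h, hcj] at hci; omega
      simp only [hine, if_false, hij, if_true, hne]
      rw [hci, hcj]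
      have : i - 1 < min j A := by omega
      simp [this]; omega
    · have hci : c (a i) = i := hdet c hc i hi
      have hne : a i ≠ a j := by
        intro h; rw [h, hcj] at hci; omega
      simp only [hine, if_false, hij, hne]
      rw [hci, hcj]
      have : ¬ i < min j A := by omega
      simp [this]
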